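/- Let H be a Hilbert space with V ∋ θ open and L ∈ C²(V, ℝ). Let B(x) = d²L(x) ∈ L_s(H), and suppose 0 is either not in σ(B(θ)) or an isolated point of σ(B(θ)), with finite-dimensional kernel H⁰ and negative space H⁻. Define P(x) = P⁺B(x) − P⁻B(x) + P⁰ and Q(x) = 2P⁻B(x) + P⁰ + P⁰B(x), where P⁺, P⁻, P⁰ are the spectral orthogonal projections of B(θ). Then B(x) = P(x) + Q(x), Q(x) is a finite-rank (hence compact) operator, both P and Q depend continuously on x, and there exist δ > 0 and c > 0 such that (P(x)u, u) ≥ c‖u‖² for all u ∈ H and x ∈ B_H(θ, δ). -/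

import Mathlib

open scoped RealInnerProductSpace

set_option maxHeartbeats 1000000 in
/-- For `L ∈ C²(V,ℝ)` with Hessian operators `B(x) = d²L(x) ∈ L_s(H)` such that `0` is
at most an isolated point of `σ(B(θ))`, with spectral projections `P⁺, P⁻, P⁰` onto the
positive space `H⁺`, the finite-dimensional negative space `H⁻` and kernel `H⁰` of
`B(θ)` and spectral gap `2a₀`, the operators `P(x) = P⁺B(x) − P⁻B(x) + P⁰` and
`Q(x) = 2P⁻B(x) − P⁰ + P⁰B(x)` satisfy: `B(x) = P(x) + Q(x)`, `Q(x)` is finite-rank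
(hence compact), `P` and `Q` depend continuously on `x`, and there are `δ > 0`, `c > 0`
with `(P(x)u, u) ≥ c‖u‖²` for all `u ∈ H` and `x ∈ B_H(θ, δ)`. -/
theorem statement16 {H : Type*} [NormedAddCommGroup H] [InnerProductSpace ℝ H]
    [CompleteSpace H]
    (V : Set H) (hVopen : IsOpen V) (h0V : (0 : H) ∈ V)
    (L : H → ℝ) (L' : H → H →L[ℝ] ℝ) (L'' : H → H →L[ℝ] H →L[ℝ] ℝ)
    (hL' : ∀ x ∈ V, HasFDerivAt L (L' x) x)
    (hL'' : ∀ x ∈ V, HasFDerivAt L' (L'' x) x)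
    (hL''c : ContinuousOn L'' V)
    (B : H → H →L[ℝ] H) (hsa : ∀ x ∈ V, IsSelfAdjoint (B x))
    (hBrep : ∀ x ∈ V, ∀ u v : H, L'' x u v = ⟪B x u, v⟫)
    (hBc : ContinuousOn B V)
    -- `0` is at most an isolated point of the spectrum of `B(θ)`
    (hisol : (0 : ℝ) ∉ spectrum ℝ (B 0) ∨
      ∀ᶠ z in nhdsWithin (0 : ℝ) {(0 : ℝ)}ᶜ, z ∉ spectrum ℝ (B 0))
    -- spectral decomposition data for `B(θ)`
    (H0 Hp Hm : Submodule ℝ H)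
    (hfin0 : FiniteDimensional ℝ H0) (hfinm : FiniteDimensional ℝ Hm)
    (horth1 : Hp ≤ H0ᗮ) (horth2 : Hm ≤ H0ᗮ) (horth3 : Hp ≤ Hmᗮ)
    (hspan : H0 ⊔ Hp ⊔ Hm = ⊤)
    (hker : LinearMap.ker (B 0 : H →ₗ[ℝ] H) = H0)
    (a₀ : ℝ) (ha₀ : 0 < a₀)
    (hpos : ∀ u ∈ Hp, 2 * a₀ * ‖u‖ ^ 2 ≤ ⟪B 0 u, u⟫)
    (hneg : ∀ u ∈ Hm, ⟪B 0 u, u⟫ ≤ -(2 * a₀) * ‖u‖ ^ 2)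
    (P0 Pp Pm : H →L[ℝ] H)
    (hsum : ∀ w : H, P0 w + Pp w + Pm w = w)
    (hP0mem : ∀ w : H, P0 w ∈ H0) (hP0id : ∀ w ∈ H0, P0 w = w)
    (hPpmem : ∀ w : H, Pp w ∈ Hp) (hPpid : ∀ w ∈ Hp, Pp w = w)
    (hPmmem : ∀ w : H, Pm w ∈ Hm) (hPmid : ∀ w ∈ Hm, Pm w = w) :
    (∀ x : H, B x =
        (Pp ∘L B x - Pm ∘L B x + P0) + (2 • (Pm ∘L B x) - P0 + P0 ∘L B x)) ∧
      (∀ x : H, FiniteDimensional ℝ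
        (LinearMap.range (((2 • (Pm ∘L B x) - P0 + P0 ∘L B x) : H →L[ℝ] H) : H →ₗ[ℝ] H))) ∧
      (∀ x : H, IsCompactOperator ((2 • (Pm ∘L B x) - P0 + P0 ∘L B x) : H →L[ℝ] H)) ∧
      ContinuousOn (fun x => Pp ∘L B x - Pm ∘L B x + P0) V ∧
      ContinuousOn (fun x => 2 • (Pm ∘L B x) - P0 + P0 ∘L B x) V ∧
      ∃ δ > (0 : ℝ), ∃ c > (0 : ℝ), Metric.ball (0 : H) δ ⊆ V ∧
        ∀ x ∈ Metric.ball (0 : H) δ, ∀ u : H,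
          c * ‖u‖ ^ 2 ≤ ⟪(Pp ∘L B x - Pm ∘L B x + P0) u, u⟫ := by
  -- membership of Q x u in H0 ⊔ Hm
  have hQmem : ∀ x u, ((2 • (Pm ∘L B x) - P0 + P0 ∘L B x) : H →L[ℝ] H) u ∈ H0 ⊔ Hm := by
    intro x u
    simp only [ContinuousLinearMap.add_apply, ContinuousLinearMap.sub_apply,
      ContinuousLinearMap.smul_apply, ContinuousLinearMap.comp_apply, two_smul]
    exact add_mem (sub_mem (add_mem (Submodule.mem_sup_right (hPmmem _))
      (Submodule.mem_sup_right (hPmmem _)))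
      (Submodule.mem_sup_left (hP0mem _))) (Submodule.mem_sup_left (hP0mem _))
  refine ⟨?_, ?_, ?_, ?_, ?_, ?_⟩
  · intro x
    ext u
    have h := hsum (B x u)
    simp only [ContinuousLinearMap.add_apply, ContinuousLinearMap.sub_apply,
      ContinuousLinearMap.smul_apply, ContinuousLinearMap.comp_apply]
    conv_lhs => rw [← h]
    rw [two_smul]
    abel
  · intro x
    have hle : LinearMap.range (((2 • (Pm ∘L B x) - P0 + P0 ∘L B x) : H →L[ℝ] H) : H →ₗ[ℝ] H) ≤ H0 ⊔ Hm := by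
      rintro w ⟨u, rfl⟩
      exact hQmem x u
    exact Submodule.finiteDimensional_of_le hle
  · intro x
    set Q : H →L[ℝ] H := 2 • (Pm ∘L B x) - P0 + P0 ∘L B x with hQ
    haveI : FiniteDimensional ℝ (H0 ⊔ Hm : Submodule ℝ H) := inferInstance
    refine ⟨Subtype.val '' (Metric.closedBall (0 : (H0 ⊔ Hm : Submodule ℝ H)) ‖Q‖),
      (isCompact_closedBall _ _).image continuous_subtype_val, ?_⟩
    refine Filter.mem_of_superset (Metric.ball_mem_nhds 0 one_pos) ?_
    intro u hu
    refine ⟨⟨Q u, hQmem x u⟩, ?_, rfl⟩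
    rw [Metric.mem_closedBall, dist_zero_right]
    show ‖Q u‖ ≤ ‖Q‖
    calc ‖Q u‖ ≤ ‖Q‖ * ‖u‖ := Q.le_opNorm u
      _ ≤ ‖Q‖ * 1 := by
          have : ‖u‖ ≤ 1 := le_of_lt (by simpa using hu)
          exact mul_le_mul_of_nonneg_left this (norm_nonneg _)
      _ = ‖Q‖ := mul_one _
  · have h1 : ContinuousOn (fun x => Pp ∘L B x) V :=
      (ContinuousLinearMap.compL ℝ H H H Pp).continuous.comp_continuousOn hBc
    have h2 : ContinuousOn (fun x => Pm ∘L B x) V :=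
      (ContinuousLinearMap.compL ℝ H H H Pm).continuous.comp_continuousOn hBc
    exact (h1.sub h2).add continuousOn_const
  · have h2 : ContinuousOn (fun x => Pm ∘L B x) V :=
      (ContinuousLinearMap.compL ℝ H H H Pm).continuous.comp_continuousOn hBc
    have h0 : ContinuousOn (fun x => P0 ∘L B x) V :=
      (ContinuousLinearMap.compL ℝ H H H P0).continuous.comp_continuousOn hBc
    exact ((h2.const_smul (2:ℕ)).sub continuousOn_const).add h0
  -- the coercivity estimate
  · set m : ℝ := min (2 * a₀) 1 with hm
    have hm1 : m ≤ 2 * a₀ := min_le_left _ _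
    have hm2 : m ≤ 1 := min_le_right _ _
    have hmpos : 0 < m := lt_min (by linarith) one_pos
    -- symmetry of the projections
    have hPpSym : ∀ v w : H, ⟪Pp v, w⟫ = ⟪v, Pp w⟫ := by
      have key : ∀ v w : H, ⟪Pp v, w⟫ = ⟪Pp v, Pp w⟫ := by
        intro v w
        have h1 : ⟪Pp v, P0 w⟫ = 0 :=
          (Submodule.mem_orthogonal' _ _).mp (horth1 (hPpmem v)) _ (hP0mem w)
        have h2 : ⟪Pp v, Pm w⟫ = 0 :=
          (Submodule.mem_orthogonal' _ _).mp (horth3 (hPpmem v)) _ (hPmmem w)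
        conv_lhs => rw [← hsum w]
        rw [inner_add_right, inner_add_right, h1, h2]
        ring
      intro v w
      calc ⟪Pp v, w⟫ = ⟪Pp v, Pp w⟫ := key v w
        _ = ⟪Pp w, Pp v⟫ := real_inner_comm _ _
        _ = ⟪Pp w, v⟫ := (key w v).symm
        _ = ⟪v, Pp w⟫ := real_inner_comm _ _
    have hPmSym : ∀ v w : H, ⟪Pm v, w⟫ = ⟪v, Pm w⟫ := by
      have key : ∀ v w : H, ⟪Pm v, w⟫ = ⟪Pm v, Pm w⟫ := by
        intro v w
        have h1 : ⟪Pm v, P0 w⟫ = 0 :=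
          (Submodule.mem_orthogonal' _ _).mp (horth2 (hPmmem v)) _ (hP0mem w)
        have h2 : ⟪Pm v, Pp w⟫ = 0 :=
          (Submodule.mem_orthogonal _ _).mp (horth3 (hPpmem w)) _ (hPmmem v)
        conv_lhs => rw [← hsum w]
        rw [inner_add_right, inner_add_right, h1, h2]
        ring
      intro v w
      calc ⟪Pm v, w⟫ = ⟪Pm v, Pm w⟫ := key v w
        _ = ⟪Pm w, Pm v⟫ := real_inner_comm _ _
        _ = ⟪Pm w, v⟫ := (key w v).symm
        _ = ⟪v, Pm w⟫ := real_inner_comm _ _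
    have hsaB0 : ∀ v w : H, ⟪B 0 v, w⟫ = ⟪v, B 0 w⟫ := fun v w =>
      (ContinuousLinearMap.isSelfAdjoint_iff_isSymmetric.mp (hsa 0 h0V)) v w
    -- select δ
    have hcont : ContinuousAt B 0 := hBc.continuousAt (hVopen.mem_nhds h0V)
    have hev : ∀ᶠ x in nhds (0 : H), ‖B x - B 0‖ < m / 2 := by
      have h := Metric.tendsto_nhds.mp hcont.tendsto (m / 2) (by positivity)
      simpa [dist_eq_norm] using h
    have hV' : ∀ᶠ x in nhds (0 : H), x ∈ V := hVopen.mem_nhds h0V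
    obtain ⟨δ, hδpos, hδ⟩ := Metric.eventually_nhds_iff_ball.mp (hev.and hV')
    refine ⟨δ, hδpos, m / 2, by positivity, fun x hx => (hδ x hx).2, ?_⟩
    intro x hx u
    obtain ⟨hxB, hxV⟩ := hδ x hx
    -- orthogonality of the components of u
    have hab : ⟪P0 u, Pp u⟫ = 0 :=
      (Submodule.mem_orthogonal _ _).mp (horth1 (hPpmem u)) _ (hP0mem u)
    have hac : ⟪P0 u, Pm u⟫ = 0 :=
      (Submodule.mem_orthogonal _ _).mp (horth2 (hPmmem u)) _ (hP0mem u)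
    have hbc : ⟪Pp u, Pm u⟫ = 0 :=
      (Submodule.mem_orthogonal' _ _).mp (horth3 (hPpmem u)) _ (hPmmem u)
    -- Pythagoras
    have hpy : ‖u‖ ^ 2 = ‖P0 u‖ ^ 2 + ‖Pp u‖ ^ 2 + ‖Pm u‖ ^ 2 := by
      conv_lhs => rw [← hsum u]
      rw [norm_add_sq_real, norm_add_sq_real, inner_add_left, hab, hac, hbc]
      ring
    have hd : ‖Pp u - Pm u‖ ≤ ‖u‖ := by
      have h1 : ‖Pp u - Pm u‖ ^ 2 ≤ ‖u‖ ^ 2 := by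
        rw [norm_sub_sq_real, hbc, hpy]
        nlinarith [sq_nonneg ‖P0 u‖]
      nlinarith [norm_nonneg (Pp u - Pm u), norm_nonneg u]
    have hP0uu : ⟪P0 u, u⟫ = ‖P0 u‖ ^ 2 := by
      calc ⟪P0 u, u⟫ = ⟪P0 u, P0 u + Pp u + Pm u⟫ := by rw [hsum u]
        _ = ‖P0 u‖ ^ 2 := by
            rw [inner_add_right, inner_add_right, hab, hac, real_inner_self_eq_norm_sq]
            ring
    -- expansion of the quadratic form
    have hPxu : ⟪(Pp ∘L B x - Pm ∘L B x + P0) u, u⟫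
        = ⟪B x u, Pp u - Pm u⟫ + ‖P0 u‖ ^ 2 := by
      simp only [ContinuousLinearMap.add_apply, ContinuousLinearMap.sub_apply,
        ContinuousLinearMap.comp_apply]
      rw [inner_add_left, inner_sub_left, hPpSym, hPmSym, hP0uu, inner_sub_right]
    have hB0a : B 0 (P0 u) = 0 := by
      have : P0 u ∈ LinearMap.ker (B 0 : H →ₗ[ℝ] H) := hker ▸ hP0mem u
      exact this
    have hsplit : B 0 u = B 0 (Pp u) + B 0 (Pm u) := by
      conv_lhs => rw [← hsum u]
      rw [map_add, map_add, hB0a, zero_add]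
    have hmain0 : ⟪B 0 u, Pp u - Pm u⟫
        = ⟪B 0 (Pp u), Pp u⟫ - ⟪B 0 (Pm u), Pm u⟫ := by
      have hcross : ⟪B 0 (Pm u), Pp u⟫ = ⟪B 0 (Pp u), Pm u⟫ := by
        rw [hsaB0, real_inner_comm]
      rw [hsplit, inner_sub_right, inner_add_left, inner_add_left, hcross]
      ring
    have hdecomp : ⟪B x u, Pp u - Pm u⟫
        = ⟪B 0 u, Pp u - Pm u⟫ + ⟪B x u - B 0 u, Pp u - Pm u⟫ := by
      rw [← inner_add_left]
      congr 1
      abel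
    have herr : |⟪B x u - B 0 u, Pp u - Pm u⟫| ≤ m / 2 * ‖u‖ ^ 2 := by
      calc |⟪B x u - B 0 u, Pp u - Pm u⟫|
          ≤ ‖B x u - B 0 u‖ * ‖Pp u - Pm u‖ := abs_real_inner_le_norm _ _
        _ ≤ (‖B x - B 0‖ * ‖u‖) * ‖u‖ := by
            have h1 : ‖B x u - B 0 u‖ ≤ ‖B x - B 0‖ * ‖u‖ := by
              rw [← ContinuousLinearMap.sub_apply]
              exact ContinuousLinearMap.le_opNorm _ _
            exact mul_le_mul h1 hd (norm_nonneg _)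
              (mul_nonneg (norm_nonneg _) (norm_nonneg _))
        _ ≤ m / 2 * ‖u‖ ^ 2 := by
            rw [pow_two, ← mul_assoc]
            have : 0 ≤ ‖u‖ := norm_nonneg u
            nlinarith [norm_nonneg (B x - B 0)]
    have hbp := hpos (Pp u) (hPpmem u)
    have hbn := hneg (Pm u) (hPmmem u)
    have hEl : -(m / 2 * ‖u‖ ^ 2) ≤ ⟪B x u - B 0 u, Pp u - Pm u⟫ := by
      have := neg_abs_le ⟪B x u - B 0 u, Pp u - Pm u⟫
      linarith
    rw [hPxu, hdecomp, hmain0]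
    nlinarith [sq_nonneg ‖P0 u‖, sq_nonneg ‖Pp u‖, sq_nonneg ‖Pm u‖,
      mul_le_mul_of_nonneg_right hm1 (add_nonneg (sq_nonneg ‖Pp u‖) (sq_nonneg ‖Pm u‖)),
      mul_le_mul_of_nonneg_right hm2 (sq_nonneg ‖P0 u‖)]
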